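/- Let G > 0 and let f : 𝔽₂ⁿ → ℝ be a function of Fourier degree at most d that is G-granular, i.e., for every x ∈ 𝔽₂ⁿ the value f(x) is an integer multiple of G. Then for every γ ∈ 𝔽₂ⁿ, the Fourier coefficient f̂(γ) is an integer multiple of 2^{−d} · G. -/

import Mathlib

open Finset

abbrev F2 (n : ℕ) := Fin n → ZMod 2

/-- The 𝔽₂ bilinear form ⟨γ,x⟩ = Σᵢ γᵢ xᵢ. -/
def ip {n : ℕ} (γ x : F2 n) : ZMod 2 := ∑ i, γ i * x i

/-- The character χ_γ(x) = (-1)^⟨γ,x⟩. -/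
noncomputable def chi {n : ℕ} (γ x : F2 n) : ℝ := (-1 : ℝ) ^ (ip γ x).val

/-- Fourier coefficient f̂(γ) = 2^{-n} Σ_x f(x) (-1)^⟨γ,x⟩. -/
noncomputable def fCoeff {n : ℕ} (f : F2 n → ℝ) (γ : F2 n) : ℝ :=
  (∑ x : F2 n, f x * chi γ x) / 2 ^ n

/-- f has Fourier degree at most d. -/
def HasFourierDegLE {n : ℕ} (f : F2 n → ℝ) (d : ℕ) : Prop :=
  ∀ γ : F2 n, d < hammingNorm γ → fCoeff f γ = 0

/-- Orthogonal subspace 𝒱^⊥. -/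
def perp {n : ℕ} (V : Submodule (ZMod 2) (F2 n)) : Submodule (ZMod 2) (F2 n) where
  carrier := {γ | ∀ v ∈ V, ip γ v = 0}
  zero_mem' := by
    intro v _
    simp [ip]
  add_mem' := by
    intro a b ha hb v hv
    have h : ip (a + b) v = ip a v + ip b v := by
      simp [ip, add_mul, Finset.sum_add_distrib]
    simp only [Set.mem_setOf_eq] at ha hb ⊢
    rw [h, ha v hv, hb v hv, add_zero]
  smul_mem' := by
    intro c a ha v hv
    have h : ip (c • a) v = c * ip a v := by
      simp [ip, Finset.mul_sum, mul_assoc]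
    simp only [Set.mem_setOf_eq] at ha ⊢
    rw [h, ha v hv, mul_zero]

/-- Fourier coefficient of the restriction of f to the affine subspace α + 𝒱,
indexed by γ (from a complement 𝒲 of 𝒱^⊥):
f̂_𝒰(γ) = |𝒱|⁻¹ Σ_{x ∈ 𝒱} f(x+α)(-1)^⟨γ,x⟩. -/
noncomputable def restrictCoeff {n : ℕ} (f : F2 n → ℝ) (V : Submodule (ZMod 2) (F2 n))
    (α γ : F2 n) : ℝ :=
  (∑ x : F2 n, Set.indicator (V : Set (F2 n)) (fun x => f (x + α) * chi γ x) x) / (Nat.card V)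

/-- The restriction of f to α + 𝒱 is δ-regular. -/
def IsDeltaRegular {n : ℕ} (f : F2 n → ℝ) (V : Submodule (ZMod 2) (F2 n)) (α : F2 n)
    (δ : ℝ) : Prop :=
  ∀ W : Submodule (ZMod 2) (F2 n), IsCompl W (perp V) →
    ∀ γ ∈ W, γ ≠ 0 → |restrictCoeff f V α γ| ≤ δ

/-- span of the standard basis vectors indexed by J. -/
def spanJ {n : ℕ} (J : Finset (Fin n)) : Submodule (ZMod 2) (F2 n) where
  carrier := {x | ∀ i ∉ J, x i = 0}
  zero_mem' := by intro i _; rfl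
  add_mem' := by
    intro a b ha hb i hi
    simp only [Set.mem_setOf_eq] at ha hb ⊢
    simp [Pi.add_apply, ha i hi, hb i hi]
  smul_mem' := by
    intro c a ha i hi
    simp only [Set.mem_setOf_eq] at ha ⊢
    simp [Pi.smul_apply, ha i hi]

lemma zmod2_pow_add (a b : ZMod 2) : ((-1:ℝ))^(a+b).val = (-1)^a.val * (-1)^b.val := by
  rcases (by decide : ∀ c : ZMod 2, c = 0 ∨ c = 1) a with rfl | rfl <;> rcases (by decide : ∀ c : ZMod 2, c = 0 ∨ c = 1) b with rfl | rfl <;> norm_num [show ZMod.val (2 : ZMod 2) = 0 from rfl, show ZMod.val (1 : ZMod 2) = 1 from rfl, show ZMod.val (0 : ZMod 2) = 0 from rfl, show (1 : ZMod 2) + 1 = 0 from rfl]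

lemma ip_add_right {n : ℕ} (γ x y : F2 n) : ip γ (x + y) = ip γ x + ip γ y := by
  simp [ip, mul_add, Finset.sum_add_distrib]

lemma ip_add_left {n : ℕ} (γ δ x : F2 n) : ip (γ + δ) x = ip γ x + ip δ x := by
  simp [ip, add_mul, Finset.sum_add_distrib]

lemma chi_add_left {n : ℕ} (γ δ x : F2 n) : chi (γ + δ) x = chi γ x * chi δ x := by
  rw [chi, ip_add_left, zmod2_pow_add]; rfl

lemma ip_single {n : ℕ} (i : Fin n) (x : F2 n) : ip (Pi.single i 1) x = x i := by
  simp [ip, Pi.single_apply, ite_mul]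

lemma chi_single {n : ℕ} (i : Fin n) (x : F2 n) : chi (Pi.single i 1) x = (-1:ℝ)^(x i).val := by
  rw [chi, ip_single]

lemma ip_single_right {n : ℕ} (γ : F2 n) (i : Fin n) : ip γ (Pi.single i 1) = γ i := by
  simp [ip, Pi.single_apply, mul_ite]

lemma chi_add_right {n : ℕ} (γ x y : F2 n) : chi γ (x + y) = chi γ x * chi γ y := by
  rw [chi, ip_add_right, zmod2_pow_add]; rfl

lemma zmod2_zero_or_one (a : ZMod 2) : a = 0 ∨ a = 1 := by
  fin_cases a
  · exact Or.inl rfl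
  · exact Or.inr rfl

lemma zmod2_eq_one {a : ZMod 2} (h : a ≠ 0) : a = 1 := by
  fin_cases a
  · exact absurd rfl h
  · rfl

lemma add_single_eq_update {n : ℕ} (x : F2 n) (i : Fin n) :
    x + Pi.single i 1 = Function.update x i (x i + 1) := by
  funext j
  by_cases hj : j = i
  · subst hj; simp
  · simp [Function.update_of_ne hj, Pi.single_apply, hj]

def DependsOnF {n : ℕ} (f : F2 n → ℝ) (S : Finset (Fin n)) : Prop :=
  ∀ x y : F2 n, (∀ i ∈ S, x i = y i) → f x = f y

lemma sum_shift {n : ℕ} (F : F2 n → ℝ) (v : F2 n) :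
    ∑ x : F2 n, F (x + v) = ∑ x : F2 n, F x :=
  Fintype.sum_equiv (Equiv.addRight v) _ _ (fun _ => rfl)

/-- L3: vanishing when f doesn't depend on a coordinate in supp γ. -/
lemma sum_eq_zero_of_not_depends {n : ℕ} (f : F2 n → ℝ) (S : Finset (Fin n))
    (hf : DependsOnF f S) (i : Fin n) (hi : i ∉ S) (γ : F2 n) (hγ : γ i ≠ 0) :
    ∑ x : F2 n, f x * chi γ x = 0 := by
  have key : ∑ x : F2 n, f x * chi γ x = ∑ x : F2 n, f (x + Pi.single i 1) * chi γ (x + Pi.single i 1) :=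
    (sum_shift (fun x => f x * chi γ x) (Pi.single i 1)).symm
  have h2 : ∀ x : F2 n, f (x + Pi.single i 1) * chi γ (x + Pi.single i 1) = -(f x * chi γ x) := by
    intro x
    have hfx : f (x + Pi.single i 1) = f x := by
      apply hf
      intro j hj
      have : j ≠ i := fun h => hi (h ▸ hj)
      simp [Pi.single_apply, this]
    have h1 : chi γ (Pi.single i 1) = -1 := by
      rw [chi, ip_single_right, zmod2_eq_one hγ]
      norm_num [show ZMod.val (1 : ZMod 2) = 1 from rfl]
    have hchi : chi γ (x + Pi.single i 1) = - chi γ x := by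
      rw [chi_add_right, h1]; ring
    rw [hfx, hchi]; ring
  simp only [h2] at key
  rw [Finset.sum_neg_distrib] at key
  linarith

/-- L0: update sum identity -/
lemma sum_update_zero_add_one {n : ℕ} (F : F2 n → ℝ) (i : Fin n) :
    (∑ x : F2 n, F (Function.update x i 0)) + (∑ x : F2 n, F (Function.update x i 1))
      = 2 * ∑ x : F2 n, F x := by
  have h : ∀ x : F2 n, F (Function.update x i 0) + F (Function.update x i 1)
      = F x + F (x + Pi.single i 1) := by
    intro x
    rw [add_single_eq_update]
    rcases zmod2_zero_or_one (x i) with h | h <;> rw [h]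
    · rw [show Function.update x i 0 = x from h ▸ Function.update_eq_self i x]
      norm_num
    · rw [show Function.update x i 1 = x from h ▸ Function.update_eq_self i x,
        show (1:ZMod 2)+1 = 0 by decide]
      ring
  rw [← Finset.sum_add_distrib]
  simp only [h]
  rw [Finset.sum_add_distrib, sum_shift]
  ring

lemma chi_update {n : ℕ} (β x : F2 n) (i : Fin n) (hβ : β i = 0) (c : ZMod 2) :
    chi β (Function.update x i c) = chi β x := by
  have h : ip β (Function.update x i c) = ip β x := by
    apply Finset.sum_congr rfl
    intro j _
    by_cases hj : j = i
    · subst hj; simp [hβ]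
    · rw [Function.update_of_ne hj]
  rw [chi, chi, h]

/-- L2: restriction identity -/
lemma sum_restrict {n : ℕ} (f : F2 n → ℝ) (i : Fin n) (β : F2 n) (hβ : β i = 0) :
    ∑ x : F2 n, f (Function.update x i 0) * chi β x
      = (∑ x : F2 n, f x * chi β x) + ∑ x : F2 n, f x * chi (β + Pi.single i 1) x := by
  have hB := sum_update_zero_add_one (fun x => f x * chi β x) i
  have hC := sum_update_zero_add_one (fun x => f x * chi (β + Pi.single i 1) x) i
  have hH : ∀ (x : F2 n) (c : ZMod 2), chi (β + Pi.single i 1) (Function.update x i c)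
      = chi β (Function.update x i c) * (-1:ℝ)^(c.val) := by
    intro x c
    rw [chi_add_left, chi_single, Function.update_self]
  simp only [hH, show ZMod.val (0:ZMod 2) = 0 from rfl, show ZMod.val (1:ZMod 2) = 1 from rfl,
    pow_zero, pow_one, mul_one, mul_neg_one, mul_neg] at hC
  rw [Finset.sum_neg_distrib] at hC
  have hL : ∑ x : F2 n, f (Function.update x i 0) * chi β x
      = ∑ x : F2 n, f (Function.update x i 0) * chi β (Function.update x i 0) := by
    apply Finset.sum_congr rfl
    intro x _
    rw [chi_update β x i hβ 0]
  rw [hL]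
  linarith

/-- L4: base case -/
lemma sum_base {n : ℕ} (f : F2 n → ℝ) (S : Finset (Fin n)) (hf : DependsOnF f S) (G : ℝ)
    (hgran : ∀ x, ∃ m : ℤ, f x = (m:ℝ) * G) (γ : F2 n) (hγ : ∀ i ∉ S, γ i = 0) :
    ∃ m : ℤ, ∑ x : F2 n, f x * chi γ x = (m:ℝ) * G * 2^(n - S.card) := by
  classical
  set h : F2 n → ℝ := fun x => f x * chi γ x with hh
  have hdep : ∀ x y : F2 n, (∀ i ∈ S, x i = y i) → h x = h y := by
    intro x y hxy
    have h1 : f x = f y := hf x y hxy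
    have h2 : ip γ x = ip γ y := by
      apply Finset.sum_congr rfl
      intro j _
      by_cases hj : j ∈ S
      · rw [hxy j hj]
      · rw [hγ j hj]; ring
    simp only [hh, chi, h1, h2]
  have hmul : ∀ z : F2 n, ∃ m : ℤ, h z = (m:ℝ) * G := by
    intro z
    obtain ⟨m, hm⟩ := hgran z
    have hv : (ip γ z).val = 0 ∨ (ip γ z).val = 1 := by
      have := ZMod.val_lt (ip γ z); omega
    rcases hv with hv | hv
    · exact ⟨m, by simp only [hh, chi, hv, pow_zero, mul_one, hm]⟩
    · refine ⟨-m, ?_⟩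
      simp only [hh, chi, hv, pow_one, mul_neg_one, hm]
      push_cast; ring
  set e := (Equiv.piEquivPiSubtypeProd (· ∈ S) fun _ : Fin n => ZMod 2) with he
  have hsum : ∑ x : F2 n, h x = ∑ p, h (e.symm p) := (Equiv.sum_comp e.symm h).symm
  rw [Fintype.sum_prod_type] at hsum
  have hconst : ∀ a b, h (e.symm (a, b)) = h (e.symm (a, fun _ => 0)) := by
    intro a b
    apply hdep
    intro i hi
    simp [he, Equiv.piEquivPiSubtypeProd, hi]
  have hcard : (Fintype.card (∀ _ : {i : Fin n // ¬ i ∈ S}, ZMod 2)) = 2 ^ (n - S.card) := by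
    rw [Fintype.card_pi]
    simp [Fintype.card_subtype_compl, Fintype.card_coe]
  have hinner : ∀ a, ∑ b, h (e.symm (a, b)) = (2:ℝ) ^ (n - S.card) * h (e.symm (a, fun _ => 0)) := by
    intro a
    rw [Finset.sum_congr rfl (fun b _ => hconst a b), Finset.sum_const, Finset.card_univ, hcard,
      nsmul_eq_mul]
    push_cast
    ring
  choose m hm using fun a => hmul (e.symm (a, fun _ => 0))
  refine ⟨∑ a, m a, ?_⟩
  rw [hsum, Finset.sum_congr rfl (fun a _ => hinner a), Finset.sum_congr rfl (fun a _ => by rw [hm a])]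
  rw [← Finset.mul_sum, ← Finset.sum_mul]
  push_cast
  ring

lemma fCoeff_restrict {n : ℕ} (f : F2 n → ℝ) (i : Fin n) (β : F2 n) (hβ : β i = 0) :
    fCoeff (fun x => f (Function.update x i 0)) β
      = fCoeff f β + fCoeff f (β + Pi.single i 1) := by
  unfold fCoeff
  rw [← add_div]
  congr 1
  exact sum_restrict f i β hβ

lemma hammingNorm_lt_add_single {n : ℕ} (γ : F2 n) (i : Fin n) (hγ : γ i = 0) :
    hammingNorm γ < hammingNorm (γ + Pi.single i 1) := by
  apply Finset.card_lt_card
  constructor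
  · intro j hj
    simp only [Finset.mem_filter, Finset.mem_univ, true_and] at hj ⊢
    have hji : j ≠ i := by rintro rfl; exact hj hγ
    simpa [Pi.single_apply, hji] using hj
  · intro hsub
    have hi : i ∈ Finset.filter (fun j => (γ + Pi.single i 1 : F2 n) j ≠ 0) Finset.univ := by
      rw [Finset.mem_filter]
      refine ⟨Finset.mem_univ _, ?_⟩
      simp [hγ]
    have := hsub hi
    simp [hγ] at this

lemma key_small {n d : ℕ} (G : ℝ) (f : F2 n → ℝ) (S : Finset (Fin n))
    (hf : DependsOnF f S) (hgran : ∀ x, ∃ m : ℤ, f x = (m:ℝ) * G)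
    (hSd : S.card ≤ d) (γ : F2 n) :
    ∃ m : ℤ, fCoeff f γ = (m:ℝ) * (G / 2^d) := by
  by_cases hout : ∀ i ∉ S, γ i = 0
  · obtain ⟨m, hm⟩ := sum_base f S hf G hgran γ hout
    have hsn : S.card ≤ n := by
      simpa using Finset.card_le_univ S
    refine ⟨m * 2^(d - S.card), ?_⟩
    rw [fCoeff, hm]
    have h1 : (2:ℝ)^(n - S.card) * 2^S.card = 2^n := by
      rw [← pow_add]; congr 1; omega
    have h2 : (2:ℝ)^(d - S.card) * 2^S.card = 2^d := by
      rw [← pow_add]; congr 1; omega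
    have hpos : (0:ℝ) < 2^S.card := by positivity
    push_cast
    have h3 : (2:ℝ)^(n - S.card) / 2^n = 2^(d - S.card) / 2^d := by
      rw [div_eq_div_iff (by positivity) (by positivity), ← h1, ← h2]; ring
    rw [mul_div_assoc, h3]
    ring
  · push_neg at hout
    obtain ⟨i, hiS, hγi⟩ := hout
    refine ⟨0, ?_⟩
    rw [fCoeff, sum_eq_zero_of_not_depends f S hf i hiS γ hγi]
    simp

lemma key_main {n : ℕ} (d : ℕ) (G : ℝ) :
    ∀ M : ℕ, ∀ (f : F2 n → ℝ) (S : Finset (Fin n)),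
      DependsOnF f S → (∀ x, ∃ m : ℤ, f x = (m:ℝ) * G) → HasFourierDegLE f d →
      ∀ γ : F2 n, S.card + (d - hammingNorm γ) ≤ M →
      ∃ m : ℤ, fCoeff f γ = (m:ℝ) * (G / 2^d) := by
  intro M
  induction M with
  | zero =>
    intro f S hf hgran hdeg γ hM
    exact key_small G f S hf hgran (by omega) γ
  | succ M ih =>
    intro f S hf hgran hdeg γ hM
    by_cases hSd : S.card ≤ d
    · exact key_small G f S hf hgran hSd γ
    push_neg at hSd
    by_cases hγd : d < hammingNorm γ
    · exact ⟨0, by rw [hdeg γ hγd]; simp⟩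
    push_neg at hγd
    -- find i ∈ S with γ i = 0
    have hexists : ∃ i ∈ S, γ i = 0 := by
      by_contra hcon
      push_neg at hcon
      have hsub : S ⊆ Finset.filter (fun j => γ j ≠ 0) Finset.univ := by
        intro j hj
        rw [Finset.mem_filter]
        exact ⟨Finset.mem_univ _, hcon j hj⟩
      have := Finset.card_le_card hsub
      have hd : hammingNorm γ = (Finset.filter (fun j => γ j ≠ 0) Finset.univ).card := rfl
      omega
    obtain ⟨i, hiS, hγi⟩ := hexists
    set f0 : F2 n → ℝ := fun x => f (Function.update x i 0) with hf0
    have hdep0 : DependsOnF f0 (S.erase i) := by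
      intro x y hxy
      apply hf
      intro j hj
      by_cases hji : j = i
      · subst hji; simp
      · rw [Function.update_of_ne hji, Function.update_of_ne hji]
        exact hxy j (Finset.mem_erase.mpr ⟨hji, hj⟩)
    have hgran0 : ∀ x, ∃ m : ℤ, f0 x = (m:ℝ) * G := fun x => hgran _
    have hnorm_mono : ∀ β : F2 n, β i = 0 →
        hammingNorm β < hammingNorm (β + Pi.single i 1) := fun β hβ =>
      hammingNorm_lt_add_single β i hβ
    have hdeg0 : HasFourierDegLE f0 d := by
      intro β hβ
      by_cases hβi : β i = 0
      · rw [show fCoeff f0 β = fCoeff f β + fCoeff f (β + Pi.single i 1) from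
          fCoeff_restrict f i β hβi]
        rw [hdeg β hβ, hdeg (β + Pi.single i 1) ((hnorm_mono β hβi).trans_le' (le_of_lt hβ) |>.trans_le (le_refl _) |> fun h => h)]
        · ring
      · rw [fCoeff, sum_eq_zero_of_not_depends f0 (S.erase i) hdep0 i
          (Finset.notMem_erase i S) β hβi]
        simp
    -- main identity
    have hid : fCoeff f γ = fCoeff f0 γ - fCoeff f (γ + Pi.single i 1) := by
      rw [fCoeff_restrict f i γ hγi]; ring
    have hcard : (S.erase i).card = S.card - 1 := Finset.card_erase_of_mem hiS
    obtain ⟨m0, hm0⟩ := ih f0 (S.erase i) hdep0 hgran0 hdeg0 γ (by omega)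
    have hB : ∃ m1 : ℤ, fCoeff f (γ + Pi.single i 1) = (m1:ℝ) * (G / 2^d) := by
      by_cases hc : d < hammingNorm (γ + Pi.single i 1)
      · exact ⟨0, by rw [hdeg _ hc]; simp⟩
      · push_neg at hc
        have hlt := hnorm_mono γ hγi
        exact ih f S hf hgran hdeg (γ + Pi.single i 1) (by omega)
    obtain ⟨m1, hm1⟩ := hB
    refine ⟨m0 - m1, ?_⟩
    rw [hid, hm0, hm1]
    push_cast
    ring

/-- a G-granular function of Fourier degree at most d has Fourier
coefficients that are integer multiples of 2^{-d}·G. -/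
theorem granular_fourier_coefficients (n d : ℕ) (G : ℝ) (hG : 0 < G) (f : F2 n → ℝ)
    (hgran : ∀ x, ∃ m : ℤ, f x = (m : ℝ) * G) (hdeg : HasFourierDegLE f d) :
    ∀ γ : F2 n, ∃ m : ℤ, fCoeff f γ = (m : ℝ) * (G / 2 ^ d) := by
  intro γ
  have hdep : DependsOnF f Finset.univ := by
    intro x y hxy
    have hxy' : x = y := funext fun i => hxy i (Finset.mem_univ i)
    rw [hxy']
  exact key_main d G ((Finset.univ : Finset (Fin n)).card + d) f Finset.univ hdep hgran hdeg γ
    (by omega)
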